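/- Let f be regulated on (a,b), α strictly increasing on (a,b), and suppose (D_α f)(x) exists for all x ∈ (a,b). If (D_α f)(x) ≥ 0 for all x ∈ (a,b), then f^+(x) ≤ f^-(y) for all a < x < y < b. -/

import Mathlib

open Filter Topology Function Set MeasureTheory

/-- `x` lies in the interval `(a, b)` with extended-real endpoints. -/
def MemI (a b : EReal) (x : ℝ) : Prop := a < (x : EReal) ∧ (x : EReal) < b

/-- `f` is regulated on `(a, b)`: both one-sided limits exist (as real numbers)
at every point of `(a, b)`. -/
def RegulatedOn' (f : ℝ → ℝ) (a b : EReal) : Prop :=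
  ∀ x : ℝ, MemI a b x →
    (∃ L : ℝ, Tendsto f (𝓝[<] x) (𝓝 L)) ∧ ∃ R : ℝ, Tendsto f (𝓝[>] x) (𝓝 R)

/-- The symmetric `α`-derivative of `f` at `x` equals `A`:
`(D_α f)(x) = lim_{h↓0} (f⁻(x+h) - f⁺(x-h)) / (α⁻(x+h) - α⁺(x-h))`. -/
def HasDerivAlpha (f α : ℝ → ℝ) (x A : ℝ) : Prop :=
  Tendsto (fun h : ℝ =>
      (leftLim f (x + h) - rightLim f (x - h)) /
        (leftLim α (x + h) - rightLim α (x - h)))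
    (𝓝[>] (0 : ℝ)) (𝓝 A)

/-- The filter of real numbers approaching `b : EReal` from the left (`x ↑ b`). -/
noncomputable def leftFilter (b : EReal) : Filter ℝ := comap (fun x : ℝ => (x : EReal)) (𝓝[<] b)

/-- The filter of real numbers approaching `a : EReal` from the right (`x ↓ a`). -/
noncomputable def rightFilter (a : EReal) : Filter ℝ := comap (fun x : ℝ => (x : EReal)) (𝓝[>] a)

/-! ### Auxiliary lemmas -/

lemma memI_of_mem_Icc {a b : EReal} {u v t : ℝ} (hu : MemI a b u) (hv : MemI a b v)
    (h1 : u ≤ t) (h2 : t ≤ v) : MemI a b t :=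
  ⟨lt_of_lt_of_le hu.1 (EReal.coe_le_coe_iff.2 h1),
   lt_of_le_of_lt (EReal.coe_le_coe_iff.2 h2) hv.2⟩

lemma exists_left' {a b : EReal} {x : ℝ} (hx : MemI a b x) : ∃ p : ℝ, p < x ∧ MemI a b p := by
  obtain ⟨p, hap, hpx⟩ := EReal.lt_iff_exists_real_btwn.1 hx.1
  exact ⟨p, EReal.coe_lt_coe_iff.1 hpx, ⟨hap, hpx.trans hx.2⟩⟩

lemma exists_right' {a b : EReal} {x : ℝ} (hx : MemI a b x) : ∃ q : ℝ, x < q ∧ MemI a b q := by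
  obtain ⟨q, hxq, hqb⟩ := EReal.lt_iff_exists_real_btwn.1 hx.2
  exact ⟨q, EReal.coe_lt_coe_iff.1 hxq, ⟨hx.1.trans hxq, hqb⟩⟩

lemma tendsto_right_alpha {a b : EReal} {α : ℝ → ℝ} (hα : StrictMonoOn α {x : ℝ | MemI a b x})
    {u : ℝ} (hu : MemI a b u) : Tendsto α (𝓝[>] u) (𝓝 (rightLim α u)) := by
  obtain ⟨q, huq, hq⟩ := exists_right' hu
  have hsub : Ioo u q ⊆ {x : ℝ | MemI a b x} := fun t ht =>
    memI_of_mem_Icc hu hq ht.1.le ht.2.le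
  have hne : (Ioo u q).Nonempty := ⟨(u + q) / 2, by constructor <;> linarith⟩
  have hmono : MonotoneOn α (Ioo u q) := hα.monotoneOn.mono hsub
  have hbdd : BddBelow (α '' Ioo u q) := by
    refine ⟨α u, ?_⟩
    rintro _ ⟨t, ht, rfl⟩
    exact hα.monotoneOn hu (hsub ht) ht.1.le
  have h := MonotoneOn.tendsto_nhdsWithin_Ioo_right hne hmono hbdd
  have h2 := rightLim_eq_of_tendsto h
  rw [h2]; exact h

lemma tendsto_left_alpha {a b : EReal} {α : ℝ → ℝ} (hα : StrictMonoOn α {x : ℝ | MemI a b x})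
    {u : ℝ} (hu : MemI a b u) : Tendsto α (𝓝[<] u) (𝓝 (leftLim α u)) := by
  obtain ⟨p, hpu, hp⟩ := exists_left' hu
  have hsub : Ioo p u ⊆ {x : ℝ | MemI a b x} := fun t ht =>
    memI_of_mem_Icc hp hu ht.1.le ht.2.le
  have hne : (Ioo p u).Nonempty := ⟨(p + u) / 2, by constructor <;> linarith⟩
  have hmono : MonotoneOn α (Ioo p u) := hα.monotoneOn.mono hsub
  have hbdd : BddAbove (α '' Ioo p u) := by
    refine ⟨α u, ?_⟩
    rintro _ ⟨t, ht, rfl⟩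
    exact hα.monotoneOn (hsub ht) hu ht.2.le
  have h := MonotoneOn.tendsto_nhdsWithin_Ioo_left hne hmono hbdd
  have h2 := leftLim_eq_of_tendsto h
  rw [h2]; exact h

lemma denom_pos' {a b : EReal} {α : ℝ → ℝ} (hα : StrictMonoOn α {x : ℝ | MemI a b x})
    {u v : ℝ} (hu : MemI a b u) (hv : MemI a b v) (huv : u < v) :
    rightLim α u < leftLim α v := by
  set s := u + (v - u) / 3 with hs
  set s' := u + 2 * (v - u) / 3 with hs'
  have hus : u < s := by dsimp [s]; linarith
  have hss' : s < s' := by dsimp [s, s']; linarith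
  have hs'v : s' < v := by dsimp [s']; linarith
  have hsS : MemI a b s := memI_of_mem_Icc hu hv hus.le (by linarith)
  have hs'S : MemI a b s' := memI_of_mem_Icc hu hv (by linarith) hs'v.le
  have h1 : rightLim α u ≤ α s := by
    refine le_of_tendsto (tendsto_right_alpha hα hu) ?_
    filter_upwards [Ioo_mem_nhdsGT hus] with w hw
    exact hα.monotoneOn (memI_of_mem_Icc hu hsS hw.1.le hw.2.le) hsS hw.2.le
  have h2 : α s' ≤ leftLim α v := by
    refine ge_of_tendsto (tendsto_left_alpha hα hv) ?_
    filter_upwards [Ioo_mem_nhdsLT hs'v] with w hw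
    exact hα.monotoneOn hs'S (memI_of_mem_Icc hs'S hv hw.1.le hw.2.le) hw.1.le
  have h3 : α s < α s' := hα hsS hs'S hss'
  linarith

lemma tendsto_left_reg {a b : EReal} {f : ℝ → ℝ} (hf : RegulatedOn' f a b)
    {u : ℝ} (hu : MemI a b u) : Tendsto f (𝓝[<] u) (𝓝 (leftLim f u)) := by
  obtain ⟨L, hL⟩ := (hf u hu).1
  have h2 := leftLim_eq_of_tendsto hL
  rw [h2]; exact hL

lemma tendsto_right_reg {a b : EReal} {f : ℝ → ℝ} (hf : RegulatedOn' f a b)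
    {u : ℝ} (hu : MemI a b u) : Tendsto f (𝓝[>] u) (𝓝 (rightLim f u)) := by
  obtain ⟨R, hR⟩ := (hf u hu).2
  have h2 := rightLim_eq_of_tendsto hR
  rw [h2]; exact hR

/-! ### Limits of the one-sided-limit functions -/

lemma tendsto_rightLim_left {F : ℝ → ℝ} {m L p : ℝ} (hpm : p < m)
    (hF : Tendsto F (𝓝[<] m) (𝓝 L))
    (hR : ∀ t, p < t → t < m → Tendsto F (𝓝[>] t) (𝓝 (rightLim F t))) :
    Tendsto (fun t => rightLim F t) (𝓝[<] m) (𝓝 L) := by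
  rw [Metric.tendsto_nhds]
  intro ε hε
  have hev : ∀ᶠ s in 𝓝[<] m, dist (F s) L < ε / 2 :=
    Metric.tendsto_nhds.1 hF (ε / 2) (by positivity)
  obtain ⟨q, hqm, hq⟩ := mem_nhdsLT_iff_exists_Ioo_subset.1 hev
  have hq'm : max q p < m := max_lt hqm hpm
  filter_upwards [Ioo_mem_nhdsLT hq'm] with t ht
  have hpt : p < t := lt_of_le_of_lt (le_max_right q p) ht.1
  have hqt : q < t := lt_of_le_of_lt (le_max_left q p) ht.1
  have h1 := hR t hpt ht.2
  have h2 : ∀ᶠ s in 𝓝[>] t, dist (F s) L ≤ ε / 2 := by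
    filter_upwards [Ioo_mem_nhdsGT ht.2] with s hs
    exact (hq ⟨hqt.trans hs.1, hs.2⟩).le
  have h3 : dist (rightLim F t) L ≤ ε / 2 :=
    le_of_tendsto (h1.dist (tendsto_const_nhds (x := L))) h2
  exact h3.trans_lt (by linarith)

lemma tendsto_leftLim_left {F : ℝ → ℝ} {m L p : ℝ} (hpm : p < m)
    (hF : Tendsto F (𝓝[<] m) (𝓝 L))
    (hL : ∀ t, p < t → t < m → Tendsto F (𝓝[<] t) (𝓝 (leftLim F t))) :
    Tendsto (fun t => leftLim F t) (𝓝[<] m) (𝓝 L) := by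
  rw [Metric.tendsto_nhds]
  intro ε hε
  have hev : ∀ᶠ s in 𝓝[<] m, dist (F s) L < ε / 2 :=
    Metric.tendsto_nhds.1 hF (ε / 2) (by positivity)
  obtain ⟨q, hqm, hq⟩ := mem_nhdsLT_iff_exists_Ioo_subset.1 hev
  have hq'm : max q p < m := max_lt hqm hpm
  filter_upwards [Ioo_mem_nhdsLT hq'm] with t ht
  have hpt : p < t := lt_of_le_of_lt (le_max_right q p) ht.1
  have hqt : q < t := lt_of_le_of_lt (le_max_left q p) ht.1
  have h1 := hL t hpt ht.2
  have h2 : ∀ᶠ s in 𝓝[<] t, dist (F s) L ≤ ε / 2 := by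
    filter_upwards [Ioo_mem_nhdsLT hqt] with s hs
    exact (hq ⟨hs.1, hs.2.trans ht.2⟩).le
  have h3 : dist (leftLim F t) L ≤ ε / 2 :=
    le_of_tendsto (h1.dist (tendsto_const_nhds (x := L))) h2
  exact h3.trans_lt (by linarith)

lemma tendsto_leftLim_right {F : ℝ → ℝ} {m R q : ℝ} (hmq : m < q)
    (hF : Tendsto F (𝓝[>] m) (𝓝 R))
    (hL : ∀ t, m < t → t < q → Tendsto F (𝓝[<] t) (𝓝 (leftLim F t))) :
    Tendsto (fun t => leftLim F t) (𝓝[>] m) (𝓝 R) := by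
  rw [Metric.tendsto_nhds]
  intro ε hε
  have hev : ∀ᶠ s in 𝓝[>] m, dist (F s) R < ε / 2 :=
    Metric.tendsto_nhds.1 hF (ε / 2) (by positivity)
  obtain ⟨r, hmr, hr⟩ := mem_nhdsGT_iff_exists_Ioo_subset.1 hev
  have hmr' : m < min r q := lt_min hmr hmq
  filter_upwards [Ioo_mem_nhdsGT hmr'] with t ht
  have htq : t < q := lt_of_lt_of_le ht.2 (min_le_right r q)
  have htr : t < r := lt_of_lt_of_le ht.2 (min_le_left r q)
  have h1 := hL t ht.1 htq
  have h2 : ∀ᶠ s in 𝓝[<] t, dist (F s) R ≤ ε / 2 := by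
    filter_upwards [Ioo_mem_nhdsLT ht.1] with s hs
    exact (hr ⟨hs.1, hs.2.trans htr⟩).le
  have h3 : dist (leftLim F t) R ≤ ε / 2 :=
    le_of_tendsto (h1.dist (tendsto_const_nhds (x := R))) h2
  exact h3.trans_lt (by linarith)

lemma tendsto_sub_right'' (s : ℝ) : Tendsto (fun h : ℝ => s - h) (𝓝[>] (0:ℝ)) (𝓝[<] s) := by
  rw [tendsto_nhdsWithin_iff]
  constructor
  · have h1 : Tendsto (fun h : ℝ => s - h) (𝓝 (0:ℝ)) (𝓝 (s - 0)) :=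
      tendsto_const_nhds.sub tendsto_id
    simpa using h1.mono_left nhdsWithin_le_nhds
  · filter_upwards [self_mem_nhdsWithin] with h hh
    have : (0:ℝ) < h := hh
    simp only [mem_Iio]; linarith

lemma tendsto_add_right'' (s : ℝ) : Tendsto (fun h : ℝ => s + h) (𝓝[>] (0:ℝ)) (𝓝[>] s) := by
  rw [tendsto_nhdsWithin_iff]
  constructor
  · have h1 : Tendsto (fun h : ℝ => s + h) (𝓝 (0:ℝ)) (𝓝 (s + 0)) :=
      tendsto_const_nhds.add tendsto_id
    simpa using h1.mono_left nhdsWithin_le_nhds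
  · filter_upwards [self_mem_nhdsWithin] with h hh
    have : (0:ℝ) < h := hh
    simp only [mem_Ioi]; linarith

/-! ### The auxiliary functions `g⁻ = f⁻ + ε α⁻` and `g⁺ = f⁺ + ε α⁺` -/

/-- `g⁻ = f⁻ + ε α⁻`. -/
noncomputable def Gml (f α : ℝ → ℝ) (ε s : ℝ) : ℝ := leftLim f s + ε * leftLim α s

/-- `g⁺ = f⁺ + ε α⁺`. -/
noncomputable def Gpr (f α : ℝ → ℝ) (ε s : ℝ) : ℝ := rightLim f s + ε * rightLim α s

section G

variable {a b : EReal} {f α : ℝ → ℝ} {ε : ℝ}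
  (hf : RegulatedOn' f a b) (hα : StrictMonoOn α {x : ℝ | MemI a b x})

include hf hα

lemma tGml_left {m : ℝ} (hm : MemI a b m) :
    Tendsto (Gml f α ε) (𝓝[<] m) (𝓝 (Gml f α ε m)) := by
  obtain ⟨p, hpm, hp⟩ := exists_left' hm
  have t1 := tendsto_leftLim_left hpm (tendsto_left_reg hf hm)
    (fun t h1 h2 => tendsto_left_reg hf (memI_of_mem_Icc hp hm h1.le h2.le))
  have t2 := tendsto_leftLim_left hpm (tendsto_left_alpha hα hm)
    (fun t h1 h2 => tendsto_left_alpha hα (memI_of_mem_Icc hp hm h1.le h2.le))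
  exact t1.add (t2.const_mul ε)

lemma tGml_right {m : ℝ} (hm : MemI a b m) :
    Tendsto (Gml f α ε) (𝓝[>] m) (𝓝 (Gpr f α ε m)) := by
  obtain ⟨q, hmq, hq⟩ := exists_right' hm
  have t1 := tendsto_leftLim_right hmq (tendsto_right_reg hf hm)
    (fun t h1 h2 => tendsto_left_reg hf (memI_of_mem_Icc hm hq h1.le h2.le))
  have t2 := tendsto_leftLim_right hmq (tendsto_right_alpha hα hm)
    (fun t h1 h2 => tendsto_left_alpha hα (memI_of_mem_Icc hm hq h1.le h2.le))
  exact t1.add (t2.const_mul ε)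

lemma tGpr_left {m : ℝ} (hm : MemI a b m) :
    Tendsto (Gpr f α ε) (𝓝[<] m) (𝓝 (Gml f α ε m)) := by
  obtain ⟨p, hpm, hp⟩ := exists_left' hm
  have t1 := tendsto_rightLim_left hpm (tendsto_left_reg hf hm)
    (fun t h1 h2 => tendsto_right_reg hf (memI_of_mem_Icc hp hm h1.le h2.le))
  have t2 := tendsto_rightLim_left hpm (tendsto_left_alpha hα hm)
    (fun t h1 h2 => tendsto_right_alpha hα (memI_of_mem_Icc hp hm h1.le h2.le))
  exact t1.add (t2.const_mul ε)

variable {D : ℝ → ℝ}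
  (hD : ∀ x : ℝ, MemI a b x → HasDerivAlpha f α x (D x))
  (hpos : ∀ x : ℝ, MemI a b x → 0 ≤ D x)

include hD hpos

lemma step6 (hε : 0 < ε) {t : ℝ} (ht : MemI a b t) :
    ∀ᶠ h in 𝓝[>] (0:ℝ),
      MemI a b (t - h) ∧ MemI a b (t + h) ∧ Gpr f α ε (t - h) ≤ Gml f α ε (t + h) := by
  obtain ⟨p, hpt, hp⟩ := exists_left' ht
  obtain ⟨q, htq, hq⟩ := exists_right' ht
  have hmem : ∀ᶠ h in 𝓝[>] (0:ℝ), MemI a b (t - h) ∧ MemI a b (t + h) := by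
    have hpos0 : (0:ℝ) < min (t - p) (q - t) := lt_min (by linarith) (by linarith)
    filter_upwards [Ioo_mem_nhdsGT hpos0] with h hh
    have h1 : h < t - p := lt_of_lt_of_le hh.2 (min_le_left _ _)
    have h2 : h < q - t := lt_of_lt_of_le hh.2 (min_le_right _ _)
    have h0 : 0 < h := hh.1
    exact ⟨memI_of_mem_Icc hp ht (by linarith) (by linarith),
           memI_of_mem_Icc ht hq (by linarith) (by linarith)⟩
  have hQ : ∀ᶠ h in 𝓝[>] (0:ℝ),
      D t - ε < (leftLim f (t + h) - rightLim f (t - h)) /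
        (leftLim α (t + h) - rightLim α (t - h)) :=
    (hD t ht).eventually (eventually_gt_nhds (by linarith : D t - ε < D t))
  filter_upwards [hmem, hQ, self_mem_nhdsWithin] with h hmem' hQ' hpos'
  refine ⟨hmem'.1, hmem'.2, ?_⟩
  have h0 : (0:ℝ) < h := hpos'
  have hd : rightLim α (t - h) < leftLim α (t + h) :=
    denom_pos' hα hmem'.1 hmem'.2 (by linarith)
  have hd' : 0 < leftLim α (t + h) - rightLim α (t - h) := by linarith
  have hlt : -ε < (leftLim f (t + h) - rightLim f (t - h)) /
      (leftLim α (t + h) - rightLim α (t - h)) :=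
    lt_of_le_of_lt (by linarith [hpos t ht]) hQ'
  have hnum : (-ε) * (leftLim α (t + h) - rightLim α (t - h)) <
      leftLim f (t + h) - rightLim f (t - h) := (lt_div_iff₀ hd').1 hlt
  show rightLim f (t - h) + ε * rightLim α (t - h) ≤
      leftLim f (t + h) + ε * leftLim α (t + h)
  nlinarith [hnum]

lemma Gml_le_Gpr (hε : 0 < ε) {s : ℝ} (hs : MemI a b s) :
    Gml f α ε s ≤ Gpr f α ε s := by
  have e1 : Tendsto (fun h : ℝ => Gpr f α ε (s - h)) (𝓝[>] (0:ℝ)) (𝓝 (Gml f α ε s)) :=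
    (tGpr_left hf hα hs).comp (tendsto_sub_right'' s)
  have e2 : Tendsto (fun h : ℝ => Gml f α ε (s + h)) (𝓝[>] (0:ℝ)) (𝓝 (Gpr f α ε s)) :=
    (tGml_right hf hα hs).comp (tendsto_add_right'' s)
  have e3 : ∀ᶠ h in 𝓝[>] (0:ℝ), Gpr f α ε (s - h) ≤ Gml f α ε (s + h) :=
    (step6 hf hα hD hpos hε hs).mono fun h hh => hh.2.2
  exact le_of_tendsto_of_tendsto e1 e2 e3

lemma key_lemma (hε : 0 < ε) {x y : ℝ} (hx : MemI a b x) (hy : MemI a b y) (hxy : x < y) :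
    Gpr f α ε x ≤ Gml f α ε y := by
  by_contra hcon
  push_neg at hcon
  set c := (Gml f α ε y + Gpr f α ε x) / 2 with hc
  have hc1 : Gml f α ε y < c := by dsimp [c]; linarith
  have hc2 : c < Gpr f α ε x := by dsimp [c]; linarith
  set E := {t : ℝ | t ∈ Ioc x y ∧ Gml f α ε t < c} with hE
  have hyE : y ∈ E := ⟨⟨hxy, le_refl y⟩, hc1⟩
  have hEne : E.Nonempty := ⟨y, hyE⟩
  have hbdd : BddBelow E := ⟨x, fun t ht => ht.1.1.le⟩
  set m := sInf E with hm
  have hm1 : x ≤ m := le_csInf hEne (fun t ht => ht.1.1.le)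
  have hm2 : m ≤ y := csInf_le hbdd hyE
  have hmS : MemI a b m := memI_of_mem_Icc hx hy hm1 hm2
  have hnear : ∀ η : ℝ, 0 < η → ∃ t ∈ E, t < m + η := fun η hη =>
    exists_lt_of_csInf_lt hEne (by linarith)
  rcases hm1.eq_or_lt with heq | hlt
  · -- m = x
    have e2 : Tendsto (Gml f α ε) (𝓝[>] x) (𝓝 (Gpr f α ε x)) := tGml_right hf hα hx
    have hev : ∀ᶠ t in 𝓝[>] x, c < Gml f α ε t :=
      e2.eventually (eventually_gt_nhds hc2)
    obtain ⟨q₀, hxq₀, hsub⟩ := mem_nhdsGT_iff_exists_Ioo_subset.1 hev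
    have hxq₀' : x < q₀ := hxq₀
    obtain ⟨t, htE, htlt⟩ := hnear (q₀ - x) (by linarith)
    have hxt : x < t := htE.1.1
    have htq₀ : t < q₀ := by rw [← heq] at htlt; linarith
    exact absurd htE.2 (not_lt.2 (hsub ⟨hxt, htq₀⟩).le)
  · -- x < m
    have hnotE : ∀ t, x < t → t < m → c ≤ Gml f α ε t := by
      intro t h1 h2
      by_contra hcon2
      push_neg at hcon2
      have : t ∈ E := ⟨⟨h1, h2.le.trans hm2⟩, hcon2⟩
      exact absurd (csInf_le hbdd this) (not_le.2 h2)
    have hGm_m : c ≤ Gml f α ε m := by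
      refine ge_of_tendsto (tGml_left hf hα hmS) ?_
      filter_upwards [Ioo_mem_nhdsLT hlt] with t ht
      exact hnotE t ht.1 ht.2
    have hmE : m ∉ E := fun h => absurd h.2 (not_lt.2 hGm_m)
    obtain ⟨δ, hδ0, hδsub⟩ :=
      mem_nhdsGT_iff_exists_Ioo_subset.1 (step6 hf hα hD hpos hε hmS)
    have hδ0' : (0:ℝ) < δ := hδ0
    obtain ⟨t, htE, htlt⟩ := hnear (min δ (m - x)) (lt_min hδ0' (by linarith))
    have hmt : m ≤ t := csInf_le hbdd htE
    have hmt' : m < t := lt_of_le_of_ne hmt (fun h => hmE (h ▸ htE))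
    set h := t - m with hh
    have hhδ : h < δ := by
      have := lt_of_lt_of_le htlt (by linarith [min_le_left δ (m - x)] : m + min δ (m - x) ≤ m + δ)
      dsimp [h]; linarith
    have hhmx : h < m - x := by
      have := lt_of_lt_of_le htlt (by linarith [min_le_right δ (m - x)] : m + min δ (m - x) ≤ m + (m - x))
      dsimp [h]; linarith
    have hh0 : 0 < h := by dsimp [h]; linarith
    obtain ⟨hmem1, hmem2, hstep⟩ := hδsub ⟨hh0, hhδ⟩
    have e1 : c ≤ Gml f α ε (m - h) := hnotE (m - h) (by linarith) (by linarith)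
    have e2 : Gml f α ε (m - h) ≤ Gpr f α ε (m - h) := Gml_le_Gpr hf hα hD hpos hε hmem1
    have e4 : Gml f α ε (m + h) < c := by
      have : m + h = t := by dsimp [h]; ring
      rw [this]; exact htE.2
    linarith

end G

/-- If `D_α f ≥ 0` on `(a,b)`, then `f⁺(x) ≤ f⁻(y)` for all `a < x < y < b`. -/
theorem stmt10 (a b : EReal) (hab : a < b) (f α : ℝ → ℝ) (D : ℝ → ℝ)
    (hf : RegulatedOn' f a b) (hα : StrictMonoOn α {x : ℝ | MemI a b x})
    (hD : ∀ x : ℝ, MemI a b x → HasDerivAlpha f α x (D x))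
    (hpos : ∀ x : ℝ, MemI a b x → 0 ≤ D x) :
    ∀ x y : ℝ, MemI a b x → MemI a b y → x < y → rightLim f x ≤ leftLim f y := by
  intro x y hx hy hxy
  have hC : rightLim α x < leftLim α y := denom_pos' hα hx hy hxy
  by_contra hcon
  push_neg at hcon
  set d := rightLim f x - leftLim f y with hd
  have hd0 : 0 < d := by dsimp [d]; linarith
  set C := leftLim α y - rightLim α x with hCdef
  have hC0 : 0 < C := by dsimp [C]; linarith
  set e := d / (2 * C) with he
  have he0 : 0 < e := by positivity
  have hk := key_lemma hf hα hD hpos he0 hx hy hxy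
  have hk' : rightLim f x + e * rightLim α x ≤ leftLim f y + e * leftLim α y := hk
  have h3 : e * C = d / 2 := by dsimp [e]; field_simp
  have h4 : e * leftLim α y - e * rightLim α x = e * C := by dsimp [C]; ring
  linarith
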